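/- Let φ : [1,∞) → (0,∞) be increasing, differentiable and concave. For each fixed t ≥ 0, the function u ↦ H_φ^{-1}(H_φ(u) + t), defined for u ∈ [1,∞), is differentiable with derivative φ(H_φ^{-1}(H_φ(u)+t))/φ(u) at every u ≥ 1, and it is concave on [1,∞). -/

import Mathlib

/-- For `φ : [1,∞) → (0,∞)` increasing, differentiable and concave and any fixed `t ≥ 0`,
the function `u ↦ H_φ⁻¹(H_φ(u) + t)` is differentiable on `[1,∞)` with derivative
`φ(H_φ⁻¹(H_φ(u)+t))/φ(u)` and is concave on `[1,∞)`. -/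
theorem Hinv_shift_deriv_concave
    (φ φ' : ℝ → ℝ)
    (hφ_pos : ∀ u : ℝ, 1 ≤ u → 0 < φ u)
    (hφ_mono : StrictMonoOn φ (Set.Ici 1))
    (hφ_deriv : ∀ u ∈ Set.Ici (1:ℝ), HasDerivWithinAt φ (φ' u) (Set.Ici 1) u)
    (hφ_conc : ConcaveOn ℝ (Set.Ici 1) φ)
    (H : ℝ → ℝ) (hH : ∀ u : ℝ, H u = ∫ s in (1:ℝ)..u, (φ s)⁻¹)
    (Hinv : ℝ → ℝ)
    (hHinv_mem : ∀ s : ℝ, 0 ≤ s → 1 ≤ Hinv s)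
    (hHinv_left : ∀ u : ℝ, 1 ≤ u → Hinv (H u) = u)
    (hHinv_right : ∀ s : ℝ, 0 ≤ s → H (Hinv s) = s)
    (t : ℝ) (ht : 0 ≤ t) :
    (∀ u ∈ Set.Ici (1:ℝ),
      HasDerivWithinAt (fun v => Hinv (H v + t)) (φ (Hinv (H u + t)) / φ u) (Set.Ici 1) u) ∧
    ConcaveOn ℝ (Set.Ici 1) (fun u => Hinv (H u + t)) := by
  -- Basic continuity facts
  have hφc : ContinuousOn φ (Set.Ici 1) := fun u hu => (hφ_deriv u hu).continuousWithinAt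
  have hφne : ∀ u ∈ Set.Ici (1:ℝ), φ u ≠ 0 := fun u hu => (hφ_pos u hu).ne'
  have hinvc : ContinuousOn (fun s => (φ s)⁻¹) (Set.Ici 1) := hφc.inv₀ hφne
  have hφAt : ∀ u : ℝ, 1 < u → HasDerivAt φ (φ' u) u := fun u hu =>
    (hφ_deriv u (le_of_lt hu)).hasDerivAt (Ici_mem_nhds hu)
  have hInt : ∀ a b : ℝ, 1 ≤ a → 1 ≤ b →
      IntervalIntegrable (fun s => (φ s)⁻¹) MeasureTheory.volume a b := by
    intro a b ha hb
    apply (hinvc.mono ?_).intervalIntegrable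
    intro x hx
    rcases Set.mem_uIcc.1 hx with h | h
    · exact le_trans ha h.1
    · exact le_trans hb h.1
  -- H(1) = 0
  have hH1 : H 1 = 0 := by rw [hH 1, intervalIntegral.integral_same]
  -- H is strictly monotone on [1,∞)
  have hHmono : StrictMonoOn H (Set.Ici 1) := by
    intro a ha b hb hab
    have hsplit : H a + ∫ s in a..b, (φ s)⁻¹ = H b := by
      rw [hH a, hH b]
      exact intervalIntegral.integral_add_adjacent_intervals (hInt 1 a le_rfl ha) (hInt a b ha hb)
    have hpos : 0 < ∫ s in a..b, (φ s)⁻¹ := by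
      apply intervalIntegral.intervalIntegral_pos_of_pos_on (hInt a b ha hb) _ hab
      intro x hx
      exact inv_pos.2 (hφ_pos x (le_trans ha (le_of_lt hx.1)))
    linarith
  have hHmono' : MonotoneOn H (Set.Ici 1) := hHmono.monotoneOn
  -- H is nonnegative on [1,∞)
  have hHnn : ∀ u : ℝ, 1 ≤ u → 0 ≤ H u := by
    intro u hu
    rcases eq_or_lt_of_le hu with rfl | hu'
    · exact le_of_eq hH1.symm
    · have := hHmono Set.self_mem_Ici hu hu'
      linarith [hH1]
  -- Hinv is monotone on [0,∞)
  have hHinv_mono : ∀ s₁ s₂ : ℝ, 0 ≤ s₁ → s₁ ≤ s₂ → Hinv s₁ ≤ Hinv s₂ := by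
    intro s₁ s₂ h1 h12
    by_contra hcon
    push_neg at hcon
    have := hHmono (Set.mem_Ici.2 (hHinv_mem s₂ (le_trans h1 h12))) (Set.mem_Ici.2 (hHinv_mem s₁ h1)) hcon
    rw [hHinv_right s₁ h1, hHinv_right s₂ (le_trans h1 h12)] at this
    linarith
  have hHinv0 : Hinv 0 = 1 := by rw [← hH1, hHinv_left 1 le_rfl]
  have hHinv_gt : ∀ s : ℝ, 0 < s → 1 < Hinv s := by
    intro s hs
    rcases lt_or_eq_of_le (hHinv_mem s (le_of_lt hs)) with h | h
    · exact h
    · exfalso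
      have := hHinv_right s (le_of_lt hs)
      rw [← h, hH1] at this
      linarith
  -- continuity of Hinv at positive points
  have hHinv_cont : ∀ s : ℝ, 0 < s → ContinuousAt Hinv s := by
    intro s hs
    set w := Hinv s with hw
    have hw1 : 1 < w := hHinv_gt s hs
    rw [Metric.continuousAt_iff]
    intro ε hε
    set ε' := min (ε / 2) ((w - 1) / 2) with hε'def
    have hε'pos : 0 < ε' := lt_min (by linarith) (by linarith)
    have hε'lt : ε' < ε := lt_of_le_of_lt (min_le_left _ _) (by linarith)
    have hwl : 1 ≤ w - ε' := by
      have : ε' ≤ (w - 1) / 2 := min_le_right _ _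
      linarith
    have hwr : 1 ≤ w + ε' := by linarith
    have hHs : H w = s := hHinv_right s (le_of_lt hs)
    have hl : H (w - ε') < s := by
      rw [← hHs]; exact hHmono (Set.mem_Ici.2 hwl) (Set.mem_Ici.2 (by linarith)) (by linarith)
    have hr : s < H (w + ε') := by
      rw [← hHs]; exact hHmono (Set.mem_Ici.2 (by linarith)) (Set.mem_Ici.2 hwr) (by linarith)
    refine ⟨min (s - H (w - ε')) (H (w + ε') - s), lt_min (by linarith) (by linarith), ?_⟩
    intro y hy
    rw [Real.dist_eq] at hy ⊢
    have hy1 : H (w - ε') < y := by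
      have := abs_lt.1 hy
      have h2 : min (s - H (w - ε')) (H (w + ε') - s) ≤ s - H (w - ε') := min_le_left _ _
      linarith [this.1]
    have hy2 : y < H (w + ε') := by
      have := abs_lt.1 hy
      have h2 : min (s - H (w - ε')) (H (w + ε') - s) ≤ H (w + ε') - s := min_le_right _ _
      linarith [this.2]
    have hynn : 0 ≤ y := le_trans (hHnn _ hwl) (le_of_lt hy1)
    have hmem : 1 ≤ Hinv y := hHinv_mem y hynn
    have hlow : w - ε' < Hinv y := by
      by_contra hcon
      push_neg at hcon
      have := hHmono' (Set.mem_Ici.2 hmem) (Set.mem_Ici.2 hwl) hcon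
      rw [hHinv_right y hynn] at this
      linarith
    have hhigh : Hinv y < w + ε' := by
      by_contra hcon
      push_neg at hcon
      have := hHmono' (Set.mem_Ici.2 hwr) (Set.mem_Ici.2 hmem) hcon
      rw [hHinv_right y hynn] at this
      linarith
    rw [abs_lt]
    constructor <;> [linarith; linarith]
  -- derivative of H (within Ici 1, and full at interior points)
  have hHderivWithin : ∀ u : ℝ, 1 ≤ u → HasDerivWithinAt H ((φ u)⁻¹) (Set.Ici 1) u := by
    intro u hu
    have key : HasDerivWithinAt (fun v => ∫ s in (1:ℝ)..v, (φ s)⁻¹) ((φ u)⁻¹) (Set.Ici 1) u := by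
      rcases eq_or_lt_of_le hu with rfl | hu'
      · exact intervalIntegral.integral_hasDerivWithinAt_right (t := Set.Ioi 1)
          (hInt 1 1 le_rfl le_rfl)
          ((hinvc.stronglyMeasurableAtFilter_nhdsWithin measurableSet_Ici 1).filter_mono
            (nhdsWithin_mono _ Set.Ioi_subset_Ici_self))
          ((hinvc 1 Set.self_mem_Ici).mono Set.Ioi_subset_Ici_self)
      · have hca : ∀ x ∈ Set.Ioi (1:ℝ), ContinuousAt (fun s => (φ s)⁻¹) x := fun x hx =>
          ((hφAt x hx).continuousAt).inv₀ (hφne x (Set.mem_Ici.2 (le_of_lt hx)))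
        have := intervalIntegral.integral_hasDerivAt_right (hInt 1 u le_rfl hu)
          (ContinuousAt.stronglyMeasurableAtFilter isOpen_Ioi hca u hu') (hca u hu')
        exact this.hasDerivWithinAt
    exact key.congr (fun x _ => hH x) (hH u)
  have hHderivAt : ∀ u : ℝ, 1 < u → HasDerivAt H ((φ u)⁻¹) u :=
    fun u hu => (hHderivWithin u (le_of_lt hu)).hasDerivAt (Ici_mem_nhds hu)
  -- derivative of Hinv at positive points
  have hHinvDeriv : ∀ s : ℝ, 0 < s → HasDerivAt Hinv (φ (Hinv s)) s := by
    intro s hs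
    have hw1 : 1 < Hinv s := hHinv_gt s hs
    have h := HasDerivAt.of_local_left_inverse (hHinv_cont s hs)
      (hHderivAt (Hinv s) hw1) (inv_ne_zero (hφne _ (le_of_lt hw1)))
      (by
        filter_upwards [Ioi_mem_nhds hs] with y hy
        exact hHinv_right y (le_of_lt hy))
    rwa [inv_inv] at h
  -- the main derivative statement
  have main : ∀ u ∈ Set.Ici (1:ℝ),
      HasDerivWithinAt (fun v => Hinv (H v + t)) (φ (Hinv (H u + t)) / φ u) (Set.Ici 1) u := by
    intro u hu
    rcases eq_or_lt_of_le (add_nonneg (hHnn u hu) ht) with h0 | h0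
    · -- H u + t = 0, so u = 1 and t = 0
      have hHu : H u = 0 := le_antisymm (by linarith [hHnn u hu]) (hHnn u hu)
      have ht0 : t = 0 := by linarith [hHnn u hu]
      have hu1 : u = 1 := by
        rcases eq_or_lt_of_le (Set.mem_Ici.1 hu) with h | h
        · exact h.symm
        · exfalso
          have := hHmono Set.self_mem_Ici hu h
          rw [hH1, hHu] at this; exact lt_irrefl 0 this
      have hval : φ (Hinv (H u + t)) / φ u = 1 := by
        rw [ht0, add_zero, hHinv_left u hu, div_self (hφne u hu)]
      rw [hval]
      have hid : HasDerivWithinAt (fun v : ℝ => v) 1 (Set.Ici 1) u := hasDerivWithinAt_id u _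
      apply hid.congr
      · intro x hx
        rw [ht0, add_zero, hHinv_left x hx]
      · rw [ht0, add_zero, hHinv_left u hu]
    · -- H u + t > 0
      have hinner : HasDerivWithinAt (fun v => H v + t) ((φ u)⁻¹) (Set.Ici 1) u :=
        (hHderivWithin u hu).add_const t
      have houter : HasDerivAt Hinv (φ (Hinv (H u + t))) (H u + t) := hHinvDeriv _ h0
      have := houter.comp_hasDerivWithinAt u hinner
      rwa [div_eq_mul_inv]
  refine ⟨main, ?_⟩
  -- auxiliary facts for the concavity part
  set g : ℝ → ℝ := fun v => Hinv (H v + t) with hg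
  have hg_ge : ∀ u : ℝ, 1 ≤ u → u ≤ g u := by
    intro u hu
    have h1 : Hinv (H u) ≤ Hinv (H u + t) := hHinv_mono _ _ (hHnn u hu) (by linarith)
    rwa [hHinv_left u hu] at h1
  have hg_mem : ∀ u : ℝ, 1 ≤ u → 1 ≤ g u := fun u hu => le_trans hu (hg_ge u hu)
  have hgAt : ∀ u : ℝ, 1 < u → HasDerivAt g (φ (g u) / φ u) u :=
    fun u hu => (main u (le_of_lt hu)).hasDerivAt (Ici_mem_nhds hu)
  -- φ' is antitone on [1,∞)
  have hφ'anti : AntitoneOn φ' (Set.Ici 1) := by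
    have hdiff : DifferentiableOn ℝ φ (Set.Ici 1) :=
      fun u hu => (hφ_deriv u hu).differentiableWithinAt
    have h := hφ_conc.antitoneOn_derivWithin hdiff
    intro x hx y hy hxy
    have hx' : derivWithin φ (Set.Ici 1) x = φ' x :=
      (hφ_deriv x hx).derivWithin (uniqueDiffOn_Ici 1 x hx)
    have hy' : derivWithin φ (Set.Ici 1) y = φ' y :=
      (hφ_deriv y hy).derivWithin (uniqueDiffOn_Ici 1 y hy)
    rw [← hx', ← hy']
    exact h hx hy hxy
  -- ψ = deriv g is antitone on (1,∞)
  set ψ : ℝ → ℝ := fun u => φ (g u) / φ u with hψ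
  have hψAt : ∀ u : ℝ, 1 < u → HasDerivAt ψ
      ((φ' (g u) * (φ (g u) / φ u) * φ u - φ (g u) * φ' u) / (φ u) ^ 2) u := by
    intro u hu
    have hgu : 1 < g u := lt_of_lt_of_le hu (hg_ge u (le_of_lt hu))
    have hnum : HasDerivAt (fun v => φ (g v)) (φ' (g u) * (φ (g u) / φ u)) u :=
      (hφAt (g u) hgu).comp u (hgAt u hu)
    exact hnum.div (hφAt u hu) (hφne u (le_of_lt hu))
  have hψ'nonpos : ∀ u : ℝ, 1 < u →
      (φ' (g u) * (φ (g u) / φ u) * φ u - φ (g u) * φ' u) / (φ u) ^ 2 ≤ 0 := by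
    intro u hu
    have hφu : 0 < φ u := hφ_pos u (le_of_lt hu)
    have hφgu : 0 < φ (g u) := hφ_pos (g u) (hg_mem u (le_of_lt hu))
    have hanti : φ' (g u) ≤ φ' u :=
      hφ'anti (le_of_lt hu) (hg_mem u (le_of_lt hu)) (hg_ge u (le_of_lt hu))
    have hnum : φ' (g u) * (φ (g u) / φ u) * φ u - φ (g u) * φ' u ≤ 0 := by
      have : φ' (g u) * (φ (g u) / φ u) * φ u = φ' (g u) * φ (g u) := by
        field_simp
      rw [this]
      nlinarith
    exact div_nonpos_of_nonpos_of_nonneg hnum (sq_nonneg _)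
  have hψanti : AntitoneOn ψ (Set.Ioi 1) := by
    apply antitoneOn_of_deriv_nonpos (convex_Ioi 1)
    · exact fun u hu => ((hψAt u hu).continuousAt).continuousWithinAt
    · rw [interior_Ioi]
      exact fun u hu => ((hψAt u hu).differentiableAt).differentiableWithinAt
    · rw [interior_Ioi]
      intro u hu
      rw [(hψAt u hu).deriv]
      exact hψ'nonpos u hu
  -- conclude concavity
  apply AntitoneOn.concaveOn_of_deriv (convex_Ici 1)
  · exact fun u hu => (main u hu).continuousWithinAt
  · rw [interior_Ici]
    exact fun u hu => ((hgAt u hu).differentiableAt).differentiableWithinAt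
  · rw [interior_Ici]
    intro x hx y hy hxy
    rw [(hgAt x hx).deriv, (hgAt y hy).deriv]
    exact hψanti hx hy hxy
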